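/- Let D be a Hausdorff topological group without nontrivial convergent sequences, with |D| ≤ 𝔠, and assume 𝔠 = ℵ₁ (CH). Then every compact subset of D is finite. -/

import Mathlib

open Filter Topology Set
universe u
set_option linter.unusedSectionVars false
variable {X : Type u} [TopologicalSpace X] [T2Space X]
lemma seq_to_acc {K : Set X} (hK : IsCompact K) (hcnt : K.Countable) {z : X}
    (hz : AccPt z (𝓟 K)) :
    ∃ u : ℕ → X, (∀ n, u n ∈ K ∧ u n ≠ z) ∧ Tendsto u atTop (𝓝 z) := by
  rw [accPt_iff_nhds] at hz
  have hne : (K \ {z}).Nonempty := by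
    obtain ⟨y, hy, hyz⟩ := hz univ univ_mem
    exact ⟨y, hy.2, hyz⟩
  obtain ⟨y, hyr⟩ := (hcnt.mono (diff_subset)).exists_eq_range hne
  have hy : ∀ n, y n ∈ K ∧ y n ≠ z := by
    intro n
    have : y n ∈ K \ {z} := hyr ▸ mem_range_self n
    exact ⟨this.1, this.2⟩
  have hsep : ∀ n, ∃ A B : Set X, IsOpen A ∧ IsOpen B ∧ z ∈ A ∧ y n ∈ B ∧ Disjoint A B := by
    intro n
    obtain ⟨A, B, hA, hB, hzA, hyB, hAB⟩ := t2_separation (Ne.symm (hy n).2)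
    exact ⟨A, B, hA, hB, hzA, hyB, hAB⟩
  choose A B hA hB hzA hyB hAB using hsep
  have hAn : ∀ n : ℕ, (⋂ k ∈ Finset.range (n+1), A k) ∈ 𝓝 z := by
    intro n
    refine IsOpen.mem_nhds (isOpen_biInter_finset fun k _ => hA k) ?_
    exact mem_biInter fun k _ => hzA k
  have hu : ∀ n : ℕ, ∃ x, x ∈ (⋂ k ∈ Finset.range (n+1), A k) ∩ K ∧ x ≠ z := by
    intro n
    obtain ⟨x, hx, hxz⟩ := hz _ (hAn n)
    exact ⟨x, hx, hxz⟩
  choose u hu1 hu2 using hu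
  refine ⟨u, fun n => ⟨(hu1 n).2, hu2 n⟩, ?_⟩
  rw [tendsto_atTop_nhds]
  intro W hzW hW
  have hcov : K \ W ⊆ ⋃ n, B n := by
    intro q hq
    have hqz : q ≠ z := fun h => hq.2 (h ▸ hzW)
    have : q ∈ range y := by rw [← hyr]; exact ⟨hq.1, hqz⟩
    obtain ⟨k, hk⟩ := this
    exact mem_iUnion.2 ⟨k, hk ▸ hyB k⟩
  obtain ⟨t, ht⟩ := (hK.diff hW).elim_finite_subcover B hB hcov
  refine ⟨t.sup id, fun n hn => ?_⟩
  by_contra hnW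
  have hKn : u n ∈ K \ W := ⟨(hu1 n).2, hnW⟩
  obtain ⟨k, hkt, hkB⟩ := mem_iUnion₂.1 (ht hKn)
  have hkn : k ∈ Finset.range (n+1) := by
    have : k ≤ t.sup id := Finset.le_sup (f := id) hkt
    exact Finset.mem_range.2 (Nat.lt_succ_of_le (this.trans hn))
  have : u n ∈ A k := by
    have := (hu1 n).1
    exact mem_iInter₂.1 this k hkn
  exact (hAB k).le_bot ⟨this, hkB⟩ |>.elim

lemma acc_inter_infinite {K U : Set X} {z : X} (hz : AccPt z (𝓟 K))
    (hU : IsOpen U) (hzU : z ∈ U) : (K ∩ U).Infinite := by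
  rw [accPt_iff_nhds] at hz
  by_contra hfin
  rw [Set.not_infinite] at hfin
  have hF : ((K ∩ U) \ {z}).Finite := hfin.diff
  have hU' : (U \ ((K ∩ U) \ {z})) ∈ 𝓝 z :=
    IsOpen.mem_nhds (hU.sdiff hF.isClosed) ⟨hzU, fun h => h.2 rfl⟩
  obtain ⟨y, ⟨hyU, hyK⟩, hyz⟩ := hz _ hU'
  exact hyU.2 ⟨⟨hyK, hyU.1⟩, hyz⟩

lemma countable_compact_infinite_false
    (hseq : ∀ (u : ℕ → X) (x : X), Tendsto u atTop (𝓝 x) → ∀ᶠ n in atTop, u n = x)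
    {K : Set X} (hK : IsCompact K) (hcnt : K.Countable) (hinf : K.Infinite) : False := by
  obtain ⟨z, _, hz⟩ := hinf.exists_accPt_of_subset_isCompact hK Subset.rfl
  obtain ⟨u, hu, htend⟩ := seq_to_acc hK hcnt hz
  obtain ⟨n, hn⟩ := (hseq u z htend).exists
  exact (hu n).2 hn

def splitPred (K : Set X) (B : Bool → Set X) : Prop :=
  (∀ i, (K ∩ B i).Infinite) ∧ Disjoint (closure (B false)) (closure (B true))

lemma exists_splitPred [CompactSpace X]
    (hseq : ∀ (u : ℕ → X) (x : X), Tendsto u atTop (𝓝 x) → ∀ᶠ n in atTop, u n = x)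
    {K : Set X} (hK : IsCompact K) (hinf : K.Infinite) :
    ∃ B : Bool → Set X, splitPred K B := by
  by_cases h2 : ∃ y0 y1 : X, y0 ≠ y1 ∧ AccPt y0 (𝓟 K) ∧ AccPt y1 (𝓟 K)
  · obtain ⟨y0, y1, hne, h0, h1⟩ := h2
    obtain ⟨U, V, hUo, hVo, hy0U, hy1V, hUV⟩ := t2_separation hne
    obtain ⟨B0, hB0o, hy0B0, hB0U⟩ :=
      normal_exists_closure_subset isClosed_singleton hUo (singleton_subset_iff.2 hy0U)
    obtain ⟨B1, hB1o, hy1B1, hB1V⟩ :=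
      normal_exists_closure_subset isClosed_singleton hVo (singleton_subset_iff.2 hy1V)
    refine ⟨fun i => if i then B1 else B0, fun i => ?_, ?_⟩
    · cases i
      · simpa using acc_inter_infinite h0 hB0o (hy0B0 rfl)
      · simpa using acc_inter_infinite h1 hB1o (hy1B1 rfl)
    · simp only [if_true, if_false, Bool.false_eq_true]
      exact Disjoint.mono hB0U hB1V hUV
  · exfalso
    push_neg at h2
    have : Infinite ↥K := hinf.to_subtype
    obtain ⟨f⟩ : Nonempty (ℕ ↪ ↥K) := ⟨Infinite.natEmbedding ↥K⟩
    set T : Set X := range fun n => (f n : X) with hT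
    have hTK : T ⊆ K := by rintro x ⟨n, rfl⟩; exact (f n).2
    have hTinf : T.Infinite :=
      infinite_range_of_injective (Subtype.val_injective.comp f.injective)
    have hclK : closure T ⊆ K := closure_minimal hTK hK.isClosed
    have hclC : IsCompact (closure T) := hK.of_isClosed_subset isClosed_closure hclK
    obtain ⟨z0, _, hz0⟩ := hTinf.exists_accPt_of_subset_isCompact hK hTK
    have hclsub : closure T ⊆ T ∪ {z0} := by
      intro x hx
      by_cases hxT : x ∈ T
      · exact Or.inl hxT
      · refine Or.inr ?_
        have hacc : AccPt x (𝓟 T) := by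
          rw [accPt_iff_nhds]
          intro Un hUn
          obtain ⟨y, hy1, hy2⟩ := mem_closure_iff_nhds.1 hx Un hUn
          exact ⟨y, ⟨hy1, hy2⟩, fun h => hxT (h ▸ hy2)⟩
        by_contra hne
        exact h2 x z0 hne (hacc.mono (principal_mono.2 hTK)) (hz0.mono (principal_mono.2 hTK))
    exact countable_compact_infinite_false hseq hclC
      (((countable_range _).union (countable_singleton z0)).mono hclsub)
      (hTinf.mono subset_closure)

open Classical in
noncomputable def splitB (K : Set X) : Bool → Set X :=
  if h : ∃ B : Bool → Set X, splitPred K B then h.choose else fun _ => ∅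

lemma splitB_spec {K : Set X} (h : ∃ B : Bool → Set X, splitPred K B) :
    splitPred K (splitB K) := by
  unfold splitB
  rw [dif_pos h]
  exact h.choose_spec

noncomputable def node : (α : Ordinal.{u}) → (∀ β : Ordinal.{u}, β < α → Bool) → Set X :=
  fun α s =>
    ⋂ (β : Ordinal.{u}) (h : β < α),
      closure (splitB (node β (fun γ hγ => s γ (hγ.trans h))) (s β h))
termination_by α _ => α
decreasing_by exact h

lemma node_def (α : Ordinal.{u}) (s : ∀ β : Ordinal.{u}, β < α → Bool) :
    (node α s : Set X) = ⋂ (β : Ordinal.{u}) (h : β < α),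
      closure (splitB (node β (fun γ hγ => s γ (hγ.trans h))) (s β h)) := by
  rw [node]

lemma isClosed_node (α : Ordinal.{u}) (s : ∀ β, β < α → Bool) : IsClosed (node α s : Set X) := by
  rw [node_def]
  exact isClosed_iInter fun β => isClosed_iInter fun h => isClosed_closure

lemma node_zero (s : ∀ β : Ordinal.{u}, β < 0 → Bool) : (node 0 s : Set X) = univ := by
  rw [node_def]
  simp [fun β : Ordinal.{u} => not_lt_of_ge (zero_le (a := β))]

lemma node_anti {α β : Ordinal.{u}} (h : β ≤ α) (s : ∀ γ, γ < α → Bool) :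
    (node α s : Set X) ⊆ node β (fun γ hγ => s γ (hγ.trans_le h)) := by
  intro x hx
  rw [node_def] at hx ⊢
  simp only [mem_iInter] at hx ⊢
  intro γ hγ
  exact hx γ (hγ.trans_le h)

lemma node_succ (α : Ordinal.{u}) (s : ∀ γ, γ < Order.succ α → Bool) :
    (node (Order.succ α) s : Set X) =
      node α (fun γ h => s γ (h.trans (Order.lt_succ α))) ∩
      closure (splitB (node α (fun γ h => s γ (h.trans (Order.lt_succ α))))
        (s α (Order.lt_succ α))) := by
  apply Set.Subset.antisymm
  · intro x hx
    refine ⟨node_anti (Order.le_succ α) s hx, ?_⟩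
    rw [node_def] at hx
    simp only [mem_iInter] at hx
    exact hx α (Order.lt_succ α)
  · rintro x ⟨hx1, hx2⟩
    rw [node_def]
    simp only [mem_iInter]
    intro β hβ
    rcases lt_or_eq_of_le (Order.lt_succ_iff.1 hβ) with h | h
    · rw [node_def] at hx1
      simp only [mem_iInter] at hx1
      exact hx1 β h
    · subst h
      exact hx2

noncomputable def diagPick (S : ℕ → Set X)
    (hS : ∀ n (T : Set X), T.Finite → (S n \ T).Nonempty) : ℕ → X :=
  fun n =>
    (hS n (⋃ k : Fin n, {diagPick S hS k}) (finite_iUnion fun _ => finite_singleton _)).choose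
termination_by n => n
decreasing_by all_goals exact Fin.is_lt _

lemma diagPick_spec (S : ℕ → Set X) (hS : ∀ n (T : Set X), T.Finite → (S n \ T).Nonempty)
    (n : ℕ) :
    diagPick S hS n ∈ S n \ (⋃ k : Fin n, {diagPick S hS k}) := by
  rw [diagPick]
  exact Exists.choose_spec _

lemma diagPick_injective (S : ℕ → Set X)
    (hS : ∀ n (T : Set X), T.Finite → (S n \ T).Nonempty) :
    Function.Injective (diagPick S hS) := by
  intro a b hab
  by_contra hne
  wlog h : a < b generalizing a b
  · exact this hab.symm (Ne.symm hne) ((Ne.lt_or_gt hne).resolve_left h)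
  · exact (diagPick_spec S hS b).2 (mem_iUnion.2 ⟨⟨a, h⟩, by simp [hab]⟩)

lemma countable_Iio_omega1 {α : Ordinal.{u}} (h : α < (Cardinal.aleph 1).ord) :
    Countable ↥(Iio α) := by
  have h1 : α.card < Cardinal.aleph 1 := Cardinal.lt_ord.1 h
  have h2 : α.card ≤ Cardinal.aleph0 := by
    rwa [← Cardinal.succ_aleph0, Order.lt_succ_iff] at h1
  rw [← Cardinal.mk_le_aleph0_iff, Ordinal.mk_Iio_ordinal]
  refine le_trans (Cardinal.lift_le.2 h2) ?_
  simp

lemma node_infinite [CompactSpace X] [Infinite X]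
    (hseq : ∀ (u : ℕ → X) (x : X), Tendsto u atTop (𝓝 x) → ∀ᶠ n in atTop, u n = x) :
    ∀ α : Ordinal.{u}, α < (Cardinal.aleph 1).ord → ∀ s, ((node α s : Set X)).Infinite := by
  intro α
  induction α using Ordinal.induction with
  | h α IH =>
  intro hα s
  rcases Ordinal.zero_or_succ_or_isSuccLimit α with h0 | ⟨δ, hδ⟩ | hlim
  · subst h0; rw [node_zero]; exact infinite_univ
  · subst hδ
    have hδω : δ < (Cardinal.aleph 1).ord := (Order.lt_succ δ).trans hα
    set r := fun γ (h : γ < δ) => s γ (h.trans (Order.lt_succ δ)) with hr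
    have hKinf := IH δ (Order.lt_succ δ) hδω r
    have hK : IsCompact (node δ r : Set X) := (isClosed_node δ r).isCompact
    have hsp := splitB_spec (exists_splitPred hseq hK hKinf)
    rw [node_succ]
    exact (hsp.1 (s δ (Order.lt_succ δ))).mono
      (inter_subset_inter_right _ subset_closure)
  · by_contra hfin
    rw [Set.not_infinite] at hfin
    have hcnt : Countable ↥(Iio α) := countable_Iio_omega1 hα
    have hne : Nonempty ↥(Iio α) := ⟨⟨0, hlim.pos⟩⟩
    obtain ⟨e, he⟩ := exists_surjective_nat ↥(Iio α)
    set m : ℕ → Ordinal.{u} :=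
      fun n => Nat.rec (e 0).val (fun k ih => max ih (e (k+1)).val) n with hm
    have hm_lt : ∀ n, m n < α := by
      intro n
      induction n with
      | zero => exact (e 0).2
      | succ k ih => exact max_lt ih (e (k+1)).2
    have hm_mono : Monotone m := monotone_nat_of_le_succ fun n => le_max_left _ _
    have hm_e : ∀ k n, k ≤ n → (e k).val ≤ m n := by
      intro k n
      induction n with
      | zero => intro hk; have : k = 0 := Nat.le_zero.1 hk; subst this; exact le_rfl
      | succ j ih =>
        intro hk
        rcases Nat.lt_succ_iff_lt_or_eq.mp (Nat.lt_succ_of_le hk) with h | h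
        · exact le_trans (ih (Nat.lt_succ_iff.mp h)) (le_max_left _ _)
        · subst h; exact le_max_right _ _
    have hsucc_lt : ∀ n, Order.succ (m n) < α := fun n => hlim.succ_lt (hm_lt n)
    set M : ℕ → Set X := fun n =>
      node (Order.succ (m n)) (fun γ h => s γ (h.trans (hsucc_lt n))) with hM
    have hMinf : ∀ n, (M n).Infinite := fun n =>
      IH _ (hsucc_lt n) ((hsucc_lt n).trans hα) _
    have hMdec : ∀ k n, k ≤ n → M n ⊆ M k := by
      intro k n hkn
      exact node_anti (Order.succ_le_succ (hm_mono hkn)) _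
    have hMclosed : ∀ n, IsClosed (M n) := fun n => isClosed_node _ _
    have hMint : (⋂ n, M n) ⊆ node α s := by
      intro x hx
      rw [node_def]
      simp only [mem_iInter]
      intro β hβ
      obtain ⟨k, hk⟩ := he ⟨β, hβ⟩
      have hem : (e k).val ≤ m k := hm_e k k le_rfl
      rw [hk] at hem
      have hβm : β < Order.succ (m k) := Order.lt_succ_iff.2 hem
      have hxk : x ∈ node (Order.succ (m k)) (fun γ h => s γ (h.trans (hsucc_lt k))) :=
        mem_iInter.mp hx k
      rw [node_def] at hxk
      simp only [mem_iInter] at hxk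
      exact hxk β hβm
    have hSne : ∀ n (T : Set X), T.Finite → ((M n \ node α s) \ T).Nonempty :=
      fun n T hT => (((hMinf n).diff hfin).diff hT).nonempty
    set p := diagPick (fun n => M n \ node α s) hSne with hp
    have hpmem : ∀ n, p n ∈ M n := fun n => (diagPick_spec _ hSne n).1.1
    have hpinj := diagPick_injective _ hSne
    have hclsub : closure (range p) ⊆ range p ∪ node α s := by
      intro x hx
      by_cases hxT : x ∈ range p
      · exact Or.inl hxT
      refine Or.inr (hMint (mem_iInter.2 fun n => ?_))
      have h1 : closure (p '' Ici n) ⊆ M n :=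
        closure_minimal (by rintro _ ⟨k, hk, rfl⟩; exact hMdec n k hk (hpmem k)) (hMclosed n)
      apply h1
      have hsplit : range p ⊆ p '' Iio n ∪ p '' Ici n := by
        rintro _ ⟨k, rfl⟩
        rcases lt_or_ge k n with h | h
        · exact Or.inl ⟨k, h, rfl⟩
        · exact Or.inr ⟨k, h, rfl⟩
      have h2 : closure (range p) ⊆ p '' Iio n ∪ closure (p '' Ici n) := by
        refine (closure_mono hsplit).trans ?_
        rw [closure_union]
        exact union_subset_union_left _ ((finite_Iio n).image p).isClosed.closure_subset
      rcases h2 hx with h | h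
      · exact absurd (image_subset_range p (Iio n) h) hxT
      · exact h
    have hclcnt : (closure (range p)).Countable :=
      ((countable_range p).union hfin.countable).mono hclsub
    exact countable_compact_infinite_false hseq isClosed_closure.isCompact
      hclcnt ((infinite_range_of_injective hpinj).mono subset_closure)

lemma node_omega1_nonempty [CompactSpace X] [Infinite X]
    (hseq : ∀ (u : ℕ → X) (x : X), Tendsto u atTop (𝓝 x) → ∀ᶠ n in atTop, u n = x)
    (s : ∀ β : Ordinal.{u}, β < (Cardinal.aleph 1).ord → Bool) :
    (node (Cardinal.aleph 1).ord s : Set X).Nonempty := by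
  have hlim : Order.IsSuccLimit ((Cardinal.aleph 1).ord) :=
    Cardinal.isSuccLimit_ord (Cardinal.aleph0_le_aleph 1)
  have heq : (node (Cardinal.aleph 1).ord s : Set X) =
      ⋂ γ : ↥(Iio (Cardinal.aleph 1).ord),
        node γ.val (fun δ h => s δ (h.trans γ.2)) := by
    apply Set.Subset.antisymm
    · exact subset_iInter fun γ => node_anti γ.2.le s
    · intro x hx
      rw [node_def]
      simp only [mem_iInter]
      intro β hβ
      have hsucc : Order.succ β < (Cardinal.aleph 1).ord := hlim.succ_lt hβ
      have hxs : x ∈ node (Order.succ β) (fun δ h => s δ (h.trans hsucc)) :=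
        mem_iInter.mp hx ⟨Order.succ β, hsucc⟩
      rw [node_def] at hxs
      simp only [mem_iInter] at hxs
      exact hxs β (Order.lt_succ β)
  rw [heq]
  have hne : Nonempty ↥(Iio (Cardinal.aleph 1).ord) := ⟨⟨0, hlim.pos⟩⟩
  apply IsCompact.nonempty_iInter_of_directed_nonempty_isCompact_isClosed
  · intro γ δ
    rcases le_total γ.val δ.val with h | h
    · exact ⟨δ, node_anti h _, subset_rfl⟩
    · exact ⟨γ, subset_rfl, node_anti h _⟩
  · exact fun γ => (node_infinite hseq γ.val γ.2 _).nonempty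
  · exact fun γ => (isClosed_node _ _).isCompact
  · exact fun γ => isClosed_node _ _

lemma aux_main {Y : Type u} [TopologicalSpace Y] [T2Space Y] [CompactSpace Y]
    (hseq : ∀ (u : ℕ → Y) (x : Y), Tendsto u atTop (𝓝 x) → ∀ᶠ n in atTop, u n = x)
    (hcard : Cardinal.mk Y ≤ Cardinal.aleph 1) : Finite Y := by
  by_contra hfin
  rw [not_finite_iff_infinite] at hfin
  set Ω : Ordinal.{u} := (Cardinal.aleph 1).ord with hΩ
  set idx : ∀ β : Ordinal.{u}, β < Ω → Ω.ToType :=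
    fun β h => Ordinal.ToType.mk (o := Ω) ⟨β, h⟩ with hidx
  have key : ∀ σ : Ω.ToType → Bool,
      (node Ω (fun β h => σ (idx β h)) : Set Y).Nonempty :=
    fun σ => node_omega1_nonempty hseq _
  set f : (Ω.ToType → Bool) → Y := fun σ => (key σ).choose with hfd
  have hf : ∀ σ, f σ ∈ (node Ω (fun β h => σ (idx β h)) : Set Y) :=
    fun σ => (key σ).choose_spec
  have hfinj : Function.Injective f := by
    intro σ τ hst
    by_contra hne
    obtain ⟨w, hw⟩ := Function.ne_iff.1 hne
    set Δ : Set Ordinal.{u} := {β | ∃ h : β < Ω, σ (idx β h) ≠ τ (idx β h)} with hΔ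
    have hΔne : Δ.Nonempty := by
      refine ⟨((Ordinal.ToType.mk (o := Ω)).symm w).val, ((Ordinal.ToType.mk (o := Ω)).symm w).2, ?_⟩
      have : idx ((Ordinal.ToType.mk (o := Ω)).symm w).val ((Ordinal.ToType.mk (o := Ω)).symm w).2 = w := by
        rw [hidx]
        simp
      rwa [this]
    set β₀ := Ordinal.lt_wf.min Δ hΔne with hβ₀d
    obtain ⟨hβ₀Ω, hbit⟩ : β₀ ∈ Δ := Ordinal.lt_wf.min_mem Δ hΔne
    have hagree : ∀ γ (h : γ < β₀),
        σ (idx γ (h.trans hβ₀Ω)) = τ (idx γ (h.trans hβ₀Ω)) := by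
      intro γ h
      by_contra hc
      exact Ordinal.lt_wf.not_lt_min Δ ⟨h.trans hβ₀Ω, hc⟩ h
    have hrest : (fun γ (h : γ < β₀) => σ (idx γ (h.trans hβ₀Ω))) =
        (fun γ (h : γ < β₀) => τ (idx γ (h.trans hβ₀Ω))) := by
      funext γ h
      exact hagree γ h
    have h1 : f σ ∈ closure (splitB
        (node β₀ (fun γ h => σ (idx γ (h.trans hβ₀Ω)))) (σ (idx β₀ hβ₀Ω))) := by
      have := hf σ
      rw [node_def] at this
      simp only [mem_iInter] at this
      exact this β₀ hβ₀Ω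
    have h2 : f τ ∈ closure (splitB
        (node β₀ (fun γ h => σ (idx γ (h.trans hβ₀Ω)))) (τ (idx β₀ hβ₀Ω))) := by
      have := hf τ
      rw [node_def] at this
      simp only [mem_iInter] at this
      have h2' := this β₀ hβ₀Ω
      rw [← hrest] at h2'
      exact h2'
    have hKinf := node_infinite hseq β₀ hβ₀Ω (fun γ h => σ (idx γ (h.trans hβ₀Ω)))
    have hsp := splitB_spec (exists_splitPred hseq (isClosed_node _ _).isCompact hKinf)
    have hdisj := hsp.2
    rcases Bool.eq_false_or_eq_true (σ (idx β₀ hβ₀Ω)) with hs1 | hs1 <;>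
      rcases Bool.eq_false_or_eq_true (τ (idx β₀ hβ₀Ω)) with hs2 | hs2
    · exact hbit (hs1.trans hs2.symm)
    · rw [hs1] at h1; rw [hs2] at h2
      exact hdisj.ne_of_mem h2 h1 hst.symm
    · rw [hs1] at h1; rw [hs2] at h2
      exact hdisj.ne_of_mem h1 h2 hst
    · exact hbit (hs1.trans hs2.symm)
  have hle : Cardinal.mk (Ω.ToType → Bool) ≤ Cardinal.mk Y :=
    Cardinal.mk_le_of_injective hfinj
  rw [Cardinal.mk_arrow, Cardinal.mk_bool, Cardinal.mk_toType, hΩ, Cardinal.card_ord,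
    Cardinal.lift_uzero, Cardinal.lift_two] at hle
  exact absurd ((Cardinal.cantor (Cardinal.aleph 1)).trans_le (hle.trans hcard)) (lt_irrefl _)

theorem compact_finite_of_no_convergent_sequences {D : Type*} [Group D]
    [TopologicalSpace D] [IsTopologicalGroup D] [T2Space D]
    (hseq : ∀ (u : ℕ → D) (x : D), Tendsto u atTop (𝓝 x) → ∀ᶠ n in atTop, u n = x)
    (hcard : Cardinal.mk D ≤ Cardinal.continuum)
    (hCH : Cardinal.continuum = Cardinal.aleph 1) :
    ∀ C : Set D, IsCompact C → C.Finite := by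
  intro C hC
  haveI : CompactSpace ↥C := isCompact_iff_compactSpace.mp hC
  have hseqC : ∀ (u : ℕ → ↥C) (x : ↥C), Tendsto u atTop (𝓝 x) → ∀ᶠ n in atTop, u n = x := by
    intro u x h
    have h2 : Tendsto (fun n => (u n : D)) atTop (𝓝 (x : D)) :=
      (continuous_subtype_val.tendsto x).comp h
    filter_upwards [hseq _ _ h2] with n hn
    exact Subtype.ext hn
  have h2 := congrArg Cardinal.lift.{u_1} hCH
  rw [Cardinal.lift_continuum, Cardinal.lift_aleph, Ordinal.lift_one] at h2
  have h1 : Cardinal.lift.{u_2} (Cardinal.mk D) ≤ Cardinal.lift.{u_2} (Cardinal.aleph 1) := by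
    calc Cardinal.lift.{u_2} (Cardinal.mk D) ≤ Cardinal.lift.{u_2} Cardinal.continuum :=
          Cardinal.lift_le.mpr hcard
    _ = Cardinal.continuum := Cardinal.lift_continuum
    _ = Cardinal.aleph 1 := h2
    _ = Cardinal.lift.{u_2} (Cardinal.aleph 1) := by
          rw [Cardinal.lift_aleph, Ordinal.lift_one]
  have hcardC : Cardinal.mk ↥C ≤ Cardinal.aleph 1 :=
    (Cardinal.mk_set_le C).trans (Cardinal.lift_le.mp h1)
  have := aux_main hseqC hcardC
  exact Set.finite_coe_iff.mp this
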